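/- Let n, m, k be positive integers such that 1 < m < n, k = n − m, b = n − m + 1, and a = m·(n−m+1)/n is an integer. Let G₂ be the bipartite graph of Construction 3 with these parameters. Then G₂ is k-critical bipartite: for every subset U' of U with |U'| = m, the induced bipartite subgraph G₂[U',V] contains a perfect matching. -/

import Mathlib

/-- Ceiling division on natural numbers: `ceilDiv p q = ⌈p / q⌉` for `q > 0`. -/
def ceilDiv (p q : ℕ) : ℕ := (p + q - 1) / q

/-- Adjacency of Construction 3: with `c = gcd(n,m)`, `x = n/c`, `y = m/c`, vertex `u_i`
is adjacent to the vertices `v_{(⌈i·y/x⌉+α) mod m}` for `α ∈ {0,…,a−1}`. -/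
def cons3Adj (n m a : ℕ) (u : Fin n) (v : Fin m) : Prop :=
  ∃ α < a,
    (ceilDiv ((u : ℕ) * (m / Nat.gcd n m)) (n / Nat.gcd n m) + α) % m = (v : ℕ)

/-- A bipartite graph of order `(n,m)` (with `n > m`), given by its adjacency relation
`E : Fin n → Fin m → Prop`, is `k`-critical bipartite (for `k = n − m`) if for every subset
`U'` of the larger color class with `|U'| = m`, the induced subgraph `G[U',V]` has a perfect
matching, i.e. there is an injection `f : V → U'` with `f v` adjacent to `v` for all `v`. -/
def IsKCriticalBipartite (n m : ℕ) (E : Fin n → Fin m → Prop) : Prop :=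
  ∀ U' : Finset (Fin n), U'.card = m →
    ∃ f : Fin m → Fin n, Function.Injective f ∧ ∀ v : Fin m, f v ∈ U' ∧ E (f v) v

lemma ceilDiv_bounds (p q : ℕ) (hq : 0 < q) : p ≤ ceilDiv p q * q ∧ ceilDiv p q * q < p + q := by
  unfold ceilDiv
  have h1 : ((p+q-1)/q) * q ≤ p + q - 1 := Nat.div_mul_le_self _ _
  have h3 := Nat.div_add_mod (p+q-1) q
  have h4 := Nat.mod_lt (p+q-1) hq
  have h5 : q * ((p+q-1)/q) = ((p+q-1)/q) * q := mul_comm _ _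
  omega

lemma strictMono_gap {m n : ℕ} (f : Fin m → Fin n) (hf : StrictMono f) :
    ∀ (j₁ j₂ : Fin m), j₁ ≤ j₂ → (f j₁ : ℕ) + ((j₂ : ℕ) - (j₁ : ℕ)) ≤ f j₂ := by
  suffices H : ∀ δ (j₁ j₂ : Fin m), (j₂ : ℕ) = (j₁ : ℕ) + δ → (f j₁ : ℕ) + δ ≤ f j₂ by
    intro j₁ j₂ h
    have hle : (j₁ : ℕ) ≤ j₂ := h
    exact H ((j₂ : ℕ) - j₁) j₁ j₂ (by omega)
  intro δ
  induction δ with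
  | zero =>
    intro j₁ j₂ h
    have : j₁ = j₂ := Fin.ext (by omega)
    subst this; simp
  | succ δ ih =>
    intro j₁ j₂ h
    have hmid : (j₁ : ℕ) + δ < m := by have := j₂.isLt; omega
    have h1 := ih j₁ ⟨(j₁ : ℕ) + δ, hmid⟩ rfl
    have h2 : f ⟨(j₁ : ℕ) + δ, hmid⟩ < f j₂ := hf (by simp [Fin.lt_def]; omega)
    have h2' : (f ⟨(j₁ : ℕ) + δ, hmid⟩ : ℕ) < f j₂ := h2
    omega

lemma main_aux (n m a : ℕ) (hm : 1 < m) (hmn : m < n) (ha : a * n = m * (n - m + 1))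
    (G : ℕ → ℕ) (keyA : ∀ t : ℕ, t * m ≤ G t * n) (keyB : ∀ t : ℕ, G t * n < t * m + n)
    (i : Fin m → Fin n) (hi_mono : StrictMono i) :
    ∃ τ : Fin m → Fin m, Function.Injective τ ∧
      ∀ v : Fin m, ∃ α < a, (G ((i (τ v) : ℕ)) + α) % m = (v : ℕ) := by
  have hn : 0 < n := by omega
  have hm0 : 0 < m := by omega
  have ha1 : 1 ≤ a := by
    by_contra h
    have h0 : a = 0 := by omega
    rw [h0, zero_mul] at ha
    have : 0 < m * (n - m + 1) := Nat.mul_pos (by omega) (by omega)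
    omega
  have hZa : (a : ℤ) * n = m * ((n : ℤ) - m + 1) := by
    have h := ha; zify [hmn.le] at h; linarith
  have hgap := strictMono_gap i hi_mono
  have h_lb : ∀ j : Fin m, (j : ℕ) ≤ (i j : ℕ) := by
    intro j
    have h1 := hgap ⟨0, hm0⟩ j (by simp [Fin.le_def])
    have hz : ((⟨0, hm0⟩ : Fin m) : ℕ) = 0 := rfl
    omega
  have h_ub : ∀ j : Fin m, (i j : ℕ) + m ≤ n + j := by
    intro j
    have hlast : (m - 1 : ℕ) < m := by omega
    have h1 := hgap j ⟨m - 1, hlast⟩ (by simp [Fin.le_def]; omega)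
    have h2 : (i ⟨m - 1, hlast⟩ : ℕ) < n := (i _).isLt
    have hz : ((⟨m - 1, hlast⟩ : Fin m) : ℕ) = m - 1 := rfl
    have := j.isLt
    omega
  -- the defect function
  set d : Fin m → ℤ := fun j => (j : ℤ) - G (i j) with hd
  obtain ⟨j₀, -, hj₀⟩ := Finset.exists_min_image Finset.univ d ⟨⟨0, hm0⟩, Finset.mem_univ _⟩
  set s := d j₀ with hs
  have hmin : ∀ j, s ≤ d j := fun j => hj₀ j (Finset.mem_univ j)
  have spread : ∀ j, d j - s < a := by
    intro j
    have zA1 : ((i j : ℕ) : ℤ) * m ≤ (G (i j) : ℤ) * n := by exact_mod_cast keyA (i j)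
    have zB1 : (G ((i j : ℕ)) : ℤ) * n < ((i j : ℕ) : ℤ) * m + n := by exact_mod_cast keyB (i j)
    have zA0 : ((i j₀ : ℕ) : ℤ) * m ≤ (G (i j₀) : ℤ) * n := by exact_mod_cast keyA (i j₀)
    have zB0 : (G ((i j₀ : ℕ)) : ℤ) * n < ((i j₀ : ℕ) : ℤ) * m + n := by exact_mod_cast keyB (i j₀)
    have hjm : ((j : ℕ) : ℤ) ≤ (m : ℤ) - 1 := by have := j.isLt; omega
    have hj0m : ((j₀ : ℕ) : ℤ) ≤ (m : ℤ) - 1 := by have := j₀.isLt; omega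
    have hnm : (m : ℤ) < n := by exact_mod_cast hmn
    rcases le_total j₀ j with hle | hle
    · -- increasing direction
      have hg := hgap j₀ j hle
      have hle' : (j₀ : ℕ) ≤ (j : ℕ) := hle
      have zg : ((i j₀ : ℕ) : ℤ) + ((j : ℕ) : ℤ) - ((j₀ : ℕ) : ℤ) ≤ ((i j : ℕ) : ℤ) := by
        zify [hle'] at hg; linarith
      have hnd : (n : ℤ) * (d j - s) < n * a := by
        simp only [hd, hs]
        nlinarith [mul_nonneg (sub_nonneg.mpr (by exact_mod_cast hle' : ((j₀:ℕ):ℤ) ≤ ((j:ℕ):ℤ))) (sub_nonneg.mpr hnm.le)]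
      exact lt_of_mul_lt_mul_left hnd (by positivity)
    · -- decreasing direction
      rcases eq_or_lt_of_le hle with heq | hlt
      · have : j = j₀ := Fin.ext (congrArg Fin.val heq)
        rw [this]; simp only [hs, sub_self]; exact_mod_cast ha1
      · have hlt' : (j : ℕ) < (j₀ : ℕ) := hlt
        have zub : ((i j₀ : ℕ) : ℤ) + m ≤ (n : ℤ) + (j₀ : ℕ) := by exact_mod_cast h_ub j₀
        have zlb : ((j : ℕ) : ℤ) ≤ ((i j : ℕ) : ℤ) := by exact_mod_cast h_lb j
        have hnd : (n : ℤ) * (d j - s) < n * a := by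
          simp only [hd, hs]
          have hδ : (1 : ℤ) ≤ ((j₀ : ℕ) : ℤ) - ((j : ℕ) : ℤ) := by
            have : ((j : ℕ) : ℤ) < ((j₀ : ℕ) : ℤ) := by exact_mod_cast hlt'
            omega
          nlinarith [mul_nonneg (sub_nonneg.mpr (by linarith : (0:ℤ) ≤ ((j₀ : ℕ) : ℤ) - ((j : ℕ) : ℤ))) (sub_nonneg.mpr hnm.le)]
        exact lt_of_mul_lt_mul_left hnd (by positivity)
  -- the shift permutation
  have hmZ : (0 : ℤ) < m := by exact_mod_cast hm0
  have hmne : (m : ℤ) ≠ 0 := by omega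
  set σ : Fin m → Fin m := fun v =>
    ⟨((((v : ℕ) : ℤ) + s) % m).toNat, by
      have h1 := Int.emod_nonneg (((v : ℕ) : ℤ) + s) hmne
      have h2 := Int.emod_lt_of_pos (((v : ℕ) : ℤ) + s) hmZ
      omega⟩ with hσ
  have hσval : ∀ v : Fin m, ((σ v : ℕ) : ℤ) = (((v : ℕ) : ℤ) + s) % m := by
    intro v
    have h1 := Int.emod_nonneg (((v : ℕ) : ℤ) + s) hmne
    simp only [hσ]
    omega
  have hσinj : Function.Injective σ := by
    intro v₁ v₂ h
    have h1 : ((σ v₁ : ℕ) : ℤ) = ((σ v₂ : ℕ) : ℤ) := by exact_mod_cast congrArg Fin.val h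
    rw [hσval, hσval] at h1
    have h2 : (((v₁ : ℕ) : ℤ)) % m = ((v₂ : ℕ) : ℤ) % m := by
      have h3 : ((v₁ : ℕ) : ℤ) ≡ ((v₂ : ℕ) : ℤ) [ZMOD (m : ℤ)] := by
        simpa using Int.ModEq.sub_right s (h1 : Int.ModEq m _ _)
      exact h3
    have hv1 : (((v₁ : ℕ) : ℤ)) % m = ((v₁ : ℕ) : ℤ) :=
      Int.emod_eq_of_lt (by positivity) (by exact_mod_cast v₁.isLt)
    have hv2 : (((v₂ : ℕ) : ℤ)) % m = ((v₂ : ℕ) : ℤ) :=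
      Int.emod_eq_of_lt (by positivity) (by exact_mod_cast v₂.isLt)
    have : ((v₁ : ℕ) : ℤ) = ((v₂ : ℕ) : ℤ) := by rw [← hv1, ← hv2, h2]
    exact Fin.ext (by exact_mod_cast this)
  refine ⟨σ, hσinj, ?_⟩
  intro v
  refine ⟨(d (σ v) - s).toNat, ?_, ?_⟩
  · have h1 := spread (σ v)
    have h2 := hmin (σ v)
    omega
  · -- (G (i (σ v)) + α) % m = v
    have h2 := hmin (σ v)
    have hval : ((G ((i (σ v) : ℕ)) : ℤ) + ((d (σ v) - s).toNat : ℤ)) = ((σ v : ℕ) : ℤ) - s := by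
      rw [Int.toNat_of_nonneg (by omega)]
      simp only [hd]; ring
    have hmod : ((G ((i (σ v) : ℕ)) : ℤ) + ((d (σ v) - s).toNat : ℤ)) % m = ((v : ℕ) : ℤ) := by
      rw [hval, hσval]
      have e1 : ((((v : ℕ) : ℤ) + s) % m - s) % m = ((((v : ℕ) : ℤ) + s) - s) % m := by
        conv_rhs => rw [Int.sub_emod]
        conv_lhs => rw [Int.sub_emod, Int.emod_emod_of_dvd _ (dvd_refl (m : ℤ))]
      rw [e1, add_sub_cancel_right]
      exact Int.emod_eq_of_lt (by positivity) (by exact_mod_cast v.isLt)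
    have := hmod
    have hnatmod : (((G ((i (σ v) : ℕ)) + (d (σ v) - s).toNat) % m : ℕ) : ℤ) = ((v : ℕ) : ℤ) := by
      push_cast
      exact hmod
    exact_mod_cast hnatmod

/-- **Theorem (main_positive, constructive form).** Let `n, m, k` be positive integers such
that `1 < m < n`, `k = n − m`, `b = n − m + 1`, and `a = m·(n−m+1)/n` is an integer.
Then the graph `G₂` of Construction 3 is `k`-critical bipartite: for every subset `U'` of
`U` with `|U'| = m`, the induced bipartite subgraph `G₂[U',V]` has a perfect matching. -/
theorem stmt_18 (n m k a b : ℕ) (hm : 1 < m) (hmn : m < n)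
    (hk : k = n - m) (hb : b = n - m + 1) (ha : a * n = m * (n - m + 1)) :
    IsKCriticalBipartite n m (cons3Adj n m a) := by
  intro U' hU'
  have hn : 0 < n := by omega
  have hc1 : 1 ≤ Nat.gcd n m := Nat.gcd_pos_of_pos_left m hn
  have hxc : (n / Nat.gcd n m) * Nat.gcd n m = n := Nat.div_mul_cancel (Nat.gcd_dvd_left n m)
  have hyc : (m / Nat.gcd n m) * Nat.gcd n m = m := Nat.div_mul_cancel (Nat.gcd_dvd_right n m)
  have hx : 0 < n / Nat.gcd n m := by
    rcases Nat.eq_zero_or_pos (n / Nat.gcd n m) with h | h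
    · rw [h] at hxc; omega
    · exact h
  set G : ℕ → ℕ := fun t => ceilDiv (t * (m / Nat.gcd n m)) (n / Nat.gcd n m) with hGdef
  have keyA : ∀ t : ℕ, t * m ≤ G t * n := by
    intro t
    obtain ⟨k1, _⟩ := ceilDiv_bounds (t * (m / Nat.gcd n m)) (n / Nat.gcd n m) hx
    have h := Nat.mul_le_mul_right (Nat.gcd n m) k1
    calc t * m = t * (m / Nat.gcd n m) * Nat.gcd n m := by rw [mul_assoc, hyc]
      _ ≤ G t * (n / Nat.gcd n m) * Nat.gcd n m := h
      _ = G t * n := by rw [mul_assoc, hxc]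
  have keyB : ∀ t : ℕ, G t * n < t * m + n := by
    intro t
    obtain ⟨_, k2⟩ := ceilDiv_bounds (t * (m / Nat.gcd n m)) (n / Nat.gcd n m) hx
    have h2 : G t * (n / Nat.gcd n m) + 1 ≤ t * (m / Nat.gcd n m) + n / Nat.gcd n m := k2
    have h3 := Nat.mul_le_mul_right (Nat.gcd n m) h2
    rw [add_mul, add_mul, one_mul, mul_assoc, mul_assoc, hxc, hyc] at h3
    omega
  set e := U'.orderIsoOfFin hU' with he
  set i : Fin m → Fin n := fun j => (e j : Fin n) with hi
  have hi_mono : StrictMono i := fun x y hxy => Subtype.coe_lt_coe.mpr (e.strictMono hxy)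
  obtain ⟨τ, hτinj, hτadj⟩ := main_aux n m a hm hmn ha G keyA keyB i hi_mono
  refine ⟨fun v => i (τ v), fun v₁ v₂ h => hτinj (hi_mono.injective h), fun v => ?_⟩
  constructor
  · exact (e (τ v)).2
  · exact hτadj v
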